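/- Let P_t be reversible with respect to π with πᵢ > 0, f : E → [1,∞) with π(f²) < ∞, and suppose the h-transformed semigroup satisfies ‖P_t^f g − π^f(g)‖_{L²(ν)} ≤ e^{−σt}‖g − π^f(g)‖_{L²(ν)} for all g ∈ L²(ν), t ≥ 0, some σ > 0. Then for all i ∈ E and t ≥ 0, ‖P_t(i,·) − π‖_f ≤ π(f²)^{1/2}·(1/πᵢ − 1)^{1/2}·e^{−σt}. -/

import Mathlib

lemma cs_tsum {E : Type*} (a b : E → ℝ) (ha : Summable fun j => a j ^ 2)
    (hb : Summable fun j => b j ^ 2) :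
    ∑' j, a j * b j ≤ Real.sqrt (∑' j, a j ^ 2) * Real.sqrt (∑' j, b j ^ 2) := by
  have habs : Summable fun j => |a j * b j| := by
    apply Summable.of_nonneg_of_le (fun j => abs_nonneg _) (fun j => ?_)
      ((ha.add hb).div_const 2)
    rw [abs_mul]
    nlinarith [sq_nonneg (|a j| - |b j|), sq_abs (a j), sq_abs (b j), abs_nonneg (a j), abs_nonneg (b j)]
  have hab : Summable fun j => a j * b j := summable_abs_iff.mp habs
  calc ∑' j, a j * b j ≤ ∑' j, |a j * b j| := Summable.tsum_le_tsum (fun j => le_abs_self _) hab habs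
  _ ≤ _ := by
    apply Summable.tsum_le_of_sum_le habs
    intro s
    have h1 : (∑ j ∈ s, |a j * b j|) ^ 2 ≤ (∑ j ∈ s, a j ^ 2) * ∑ j ∈ s, b j ^ 2 := by
      have := Finset.sum_mul_sq_le_sq_mul_sq s (fun j => |a j|) (fun j => |b j|)
      simpa [abs_mul, sq_abs] using this
    have h2 : (∑ j ∈ s, a j ^ 2) ≤ ∑' j, a j ^ 2 :=
      Summable.sum_le_tsum s (fun j _ => sq_nonneg _) ha
    have h3 : (∑ j ∈ s, b j ^ 2) ≤ ∑' j, b j ^ 2 :=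
      Summable.sum_le_tsum s (fun j _ => sq_nonneg _) hb
    have hs : 0 ≤ ∑ j ∈ s, |a j * b j| := Finset.sum_nonneg fun j _ => abs_nonneg _
    have h4 : (∑ j ∈ s, |a j * b j|) ^ 2 ≤ (∑' j, a j ^ 2) * ∑' j, b j ^ 2 :=
      h1.trans (mul_le_mul h2 h3 (Finset.sum_nonneg fun j _ => sq_nonneg _)
        ((tsum_nonneg fun j => sq_nonneg _)))
    calc ∑ j ∈ s, |a j * b j| = Real.sqrt ((∑ j ∈ s, |a j * b j|) ^ 2) := (Real.sqrt_sq hs).symm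
    _ ≤ Real.sqrt ((∑' j, a j ^ 2) * ∑' j, b j ^ 2) := Real.sqrt_le_sqrt h4
    _ = _ := Real.sqrt_mul (tsum_nonneg fun j => sq_nonneg _) _

lemma sq_tsum_le {E : Type*} (a b : E → ℝ) (ha : Summable fun j => a j ^ 2)
    (hb : Summable fun j => b j ^ 2) :
    (∑' j, a j * b j) ^ 2 ≤ (∑' j, a j ^ 2) * (∑' j, b j ^ 2) := by
  have h1 := cs_tsum a b ha hb
  have hb' : Summable fun j => (-(b j)) ^ 2 := by simpa using hb
  have h2 := cs_tsum a (fun j => -(b j)) ha hb'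
  have e1 : ∑' j, a j * -(b j) = -∑' j, a j * b j := by
    rw [← tsum_neg]; exact tsum_congr fun j => by ring
  have e2 : (∑' j, (-(b j)) ^ 2) = ∑' j, b j ^ 2 := tsum_congr fun j => by ring
  rw [e1, e2] at h2
  have hy : (Real.sqrt (∑' j, a j ^ 2) * Real.sqrt (∑' j, b j ^ 2)) ^ 2
      = (∑' j, a j ^ 2) * (∑' j, b j ^ 2) := by
    rw [mul_pow, Real.sq_sqrt (tsum_nonneg fun j => sq_nonneg _),
      Real.sq_sqrt (tsum_nonneg fun j => sq_nonneg _)]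
  nlinarith [h1, h2, hy]

set_option maxHeartbeats 1000000 in
/-- If the h-transformed semigroup converges exponentially in L²(ν)
at rate σ > 0, then P_t is exponentially f-ergodic with constant
π(f²)^{1/2}·(1/πᵢ − 1)^{1/2}: ‖P_t(i,·) − π‖_f ≤ π(f²)^{1/2}(1/πᵢ − 1)^{1/2} e^{−σt}. -/
theorem f_ergodicity_from_L2_convergence {E : Type*} [Countable E]
    (P : ℝ → E → E → ℝ) (π : E → ℝ)
    (hπpos : ∀ i, 0 < π i) (hπ : HasSum π 1)
    (hPnn : ∀ t i j, 0 ≤ t → 0 ≤ P t i j) (hP : ∀ t i, 0 ≤ t → HasSum (P t i) 1)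
    (hrev : ∀ t i j, 0 ≤ t → π i * P t i j = π j * P t j i)
    (hsemi : ∀ s t, 0 ≤ s → 0 ≤ t → ∀ i j, P (t + s) i j = ∑' k, P t i k * P s k j)
    (f : E → ℝ) (hf : ∀ i, 1 ≤ f i) (hf2 : Summable fun i => π i * f i ^ 2)
    (σ : ℝ) (hσ : 0 < σ)
    (hexp : ∀ g : E → ℝ, (Summable fun i => f i ^ 2 * π i * g i ^ 2) →
      ∀ t, 0 ≤ t →
        Real.sqrt (∑' i, (f i ^ 2 * π i) *
            ((1 / f i) * (∑' j, P t i j * (f j * g j))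
              - (1 / f i) * (∑' j, π j * (f j * g j))) ^ 2)
          ≤ Real.exp (-σ * t) * Real.sqrt (∑' i, (f i ^ 2 * π i) *
              (g i - (1 / f i) * (∑' j, π j * (f j * g j))) ^ 2)) :
    ∀ i, ∀ t, 0 ≤ t →
      (∑' j, f j * |P t i j - π j|)
        ≤ Real.sqrt (∑' j, π j * f j ^ 2) * Real.sqrt (1 / π i - 1) * Real.exp (-σ * t) := by
  classical
  intro i t ht
  have hπs : Summable π := hπ.summable
  have hπnn : ∀ j, 0 ≤ π j := fun j => (hπpos j).le
  have hfpos : ∀ j, 0 < f j := fun j => lt_of_lt_of_le one_pos (hf j)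
  have hπf : Summable fun j => π j * f j := by
    apply Summable.of_nonneg_of_le (fun j => mul_nonneg (hπnn j) (hfpos j).le) (fun j => ?_) hf2
    have : f j ≤ f j ^ 2 := by nlinarith [hf j]
    exact mul_le_mul_of_nonneg_left this (hπnn j)
  have hPle1 : ∀ j k, P t j k ≤ 1 := fun j k =>
    le_hasSum (hP t j ht) k (fun l _ => hPnn t j l ht)
  have hPle : ∀ j k, P t j k ≤ π k / π j := by
    intro j k
    rw [le_div_iff₀ (hπpos j)]
    calc P t j k * π j = π j * P t j k := mul_comm _ _
    _ = π k * P t k j := hrev t j k ht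
    _ ≤ π k * 1 := mul_le_mul_of_nonneg_left (hPle1 k j) (hπnn k)
    _ = π k := mul_one _
  set g : E → ℝ := fun j => if P t i j - π j < 0 then -1 else 1 with hg
  have hgabs : ∀ j, |g j| = 1 := by
    intro j; simp only [hg]; split <;> norm_num
  have hgsq : ∀ j, g j ^ 2 = 1 := by
    intro j; simp only [hg]; split <;> norm_num
  have hπfg : Summable fun k => π k * (f k * g k) := by
    rw [← summable_abs_iff]
    apply Summable.of_nonneg_of_le (fun k => abs_nonneg _) (fun k => ?_) hπf
    rw [abs_mul, abs_mul, abs_of_nonneg (hπnn k), abs_of_nonneg (hfpos k).le, hgabs, mul_one]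
  have hPf2 : ∀ j, Summable fun k => P t j k * f k ^ 2 := by
    intro j
    apply Summable.of_nonneg_of_le (fun k => mul_nonneg (hPnn t j k ht) (sq_nonneg _))
      (fun k => ?_) (hf2.mul_right (π j)⁻¹)
    calc P t j k * f k ^ 2 ≤ (π k / π j) * f k ^ 2 :=
      mul_le_mul_of_nonneg_right (hPle j k) (sq_nonneg _)
    _ = π k * f k ^ 2 * (π j)⁻¹ := by ring
  have hPfg : ∀ j, Summable fun k => P t j k * (f k * g k) := by
    intro j
    rw [← summable_abs_iff]
    apply Summable.of_nonneg_of_le (fun k => abs_nonneg _) (fun k => ?_) (hPf2 j)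
    rw [abs_mul, abs_mul, abs_of_nonneg (hPnn t j k ht), abs_of_nonneg (hfpos k).le, hgabs,
      mul_one]
    have h1 : f k ≤ f k ^ 2 := by nlinarith [hf k]
    exact mul_le_mul_of_nonneg_left h1 (hPnn t j k ht)
  set m : ℝ := ∑' k, π k * (f k * g k) with hm
  set S : E → ℝ := fun j => ∑' k, P t j k * (f k * g k) with hS
  -- product summabilities
  have hprodf2 : Summable (fun p : E × E => π p.1 * (P t p.1 p.2 * f p.2 ^ 2)) := by
    have H : Summable (fun q : E × E => π q.1 * f q.1 ^ 2 * P t q.1 q.2) := by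
      rw [summable_prod_of_nonneg (fun q => by
        have h1 := hPnn t q.1 q.2 ht
        have h2 := hπnn q.1
        positivity)]
      constructor
      · intro j; dsimp only; exact (hP t j ht).summable.mul_left _
      · apply hf2.congr
        intro j
        dsimp only
        rw [tsum_mul_left, (hP t j ht).tsum_eq, mul_one]
    apply H.prod_symm.congr
    intro p
    simp only [Prod.fst_swap, Prod.snd_swap]
    linear_combination f p.2 ^ 2 * hrev t p.2 p.1 ht
  have hprodfg : Summable (fun p : E × E => π p.1 * (P t p.1 p.2 * (f p.2 * g p.2))) := by
    rw [← summable_abs_iff]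
    apply Summable.of_nonneg_of_le (fun p => abs_nonneg _) (fun p => ?_) hprodf2
    rw [abs_mul, abs_mul, abs_mul, abs_of_nonneg (hπnn _), abs_of_nonneg (hPnn t _ _ ht),
      abs_of_nonneg (hfpos _).le, hgabs, mul_one]
    have h1 : f p.2 ≤ f p.2 ^ 2 := by nlinarith [hf p.2]
    have h2 := hPnn t p.1 p.2 ht
    have h3 := hπnn p.1
    have h4 := mul_le_mul_of_nonneg_left h1 h2
    exact mul_le_mul_of_nonneg_left h4 h3
  have hfibfg : ∀ j, HasSum (fun k => π j * (P t j k * (f k * g k))) (π j * S j) :=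
    fun j => (hPfg j).hasSum.mul_left (π j)
  have hπS : Summable fun j => π j * S j :=
    ⟨_, hprodfg.hasSum.prod_fiberwise hfibfg⟩
  have hcol : ∀ k, Summable fun j => π j * (P t j k * (f k * g k)) := by
    intro k
    have h0 : Summable fun j => π k * P t k j * (f k * g k) :=
      ((hP t k ht).summable.mul_left (π k)).mul_right (f k * g k)
    apply h0.congr
    intro j
    linear_combination (f k * g k) * (hrev t j k ht).symm
  -- stationarity
  have hstat : ∑' j, π j * S j = m := by
    have h1 : ∀ j, π j * S j = ∑' k, π j * (P t j k * (f k * g k)) := fun j => by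
      rw [tsum_mul_left]
    have hunc : Summable (Function.uncurry fun j k => π j * (P t j k * (f k * g k))) :=
      hprodfg
    rw [tsum_congr h1, ← Summable.tsum_comm' hunc (fun j => (hPfg j).mul_left _) hcol]
    apply tsum_congr
    intro k
    have heq : ∀ j, π j * (P t j k * (f k * g k)) = π k * P t k j * (f k * g k) := by
      intro j; linear_combination (f k * g k) * hrev t j k ht
    rw [tsum_congr heq]
    have hh := ((hP t k ht).mul_left (π k)).mul_right (f k * g k)
    rw [hh.tsum_eq, mul_one]
  have hSi : S i - m = ∑' k, f k * |P t i k - π k| := by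
    rw [hS, hm, ← Summable.tsum_sub (hPfg i) hπfg]
    apply tsum_congr
    intro k
    show P t i k * (f k * g k) - π k * (f k * g k) = f k * |P t i k - π k|
    simp only [hg]
    rcases lt_or_ge (P t i k - π k) 0 with h | h
    · rw [if_pos h, abs_of_neg h]; ring
    · rw [if_neg (not_lt.mpr h), abs_of_nonneg h]; ring
  -- u and v
  set u : E → ℝ := fun j => Real.sqrt (π j) * ((if j = i then 1 / π i else 0) - 1) with hu
  set v : E → ℝ := fun j => f j * Real.sqrt (π j) * ((1 / f j) * S j - (1 / f j) * m) with hv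
  have hv' : ∀ j, v j = Real.sqrt (π j) * (S j - m) := by
    intro j
    simp only [hv]
    have hfne : f j ≠ 0 := (hfpos j).ne'
    field_simp
  have hsqpi : ∀ j, Real.sqrt (π j) * Real.sqrt (π j) = π j := fun j =>
    Real.mul_self_sqrt (hπnn j)
  have huv : ∀ j, u j * v j = (if j = i then S i - m else 0) - (π j * S j - π j * m) := by
    intro j
    rw [hv']
    simp only [hu]
    by_cases h : j = i
    · subst h
      rw [if_pos rfl, if_pos rfl]
      have hp : π j ≠ 0 := (hπpos j).ne'
      have hq := hsqpi j
      calc Real.sqrt (π j) * (1 / π j - 1) * (Real.sqrt (π j) * (S j - m))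
          = (Real.sqrt (π j) * Real.sqrt (π j)) * ((1 / π j - 1) * (S j - m)) := by ring
        _ = π j * ((1 / π j - 1) * (S j - m)) := by rw [hq]
        _ = (S j - m) - (π j * S j - π j * m) := by field_simp
    · rw [if_neg h, if_neg h]
      calc Real.sqrt (π j) * (0 - 1) * (Real.sqrt (π j) * (S j - m))
          = (Real.sqrt (π j) * Real.sqrt (π j)) * (-(S j - m)) := by ring
        _ = π j * (-(S j - m)) := by rw [hsqpi j]
        _ = 0 - (π j * S j - π j * m) := by ring
  have hsum_uv : ∑' j, u j * v j = S i - m := by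
    have h1 : Summable fun j => (if j = i then S i - m else 0 : ℝ) :=
      (hasSum_ite_eq i (S i - m)).summable
    have h3 : Summable fun j => π j * m := hπs.mul_right m
    rw [tsum_congr huv, Summable.tsum_sub h1 (hπS.sub h3), tsum_ite_eq i (fun _ => S i - m),
      Summable.tsum_sub hπS h3, hstat, tsum_mul_right, hπ.tsum_eq, one_mul, sub_self, sub_zero]
  -- sum of u^2
  have hu2 : ∀ j, u j ^ 2 = π j + (if j = i then π i * ((1 / π i - 1) ^ 2 - 1) else 0) := by
    intro j
    simp only [hu]
    by_cases h : j = i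
    · subst h
      rw [if_pos rfl, if_pos rfl, mul_pow, Real.sq_sqrt (hπnn j)]
      ring
    · rw [if_neg h, if_neg h, mul_pow, Real.sq_sqrt (hπnn j)]
      ring
  have hu2sum : Summable fun j => u j ^ 2 := by
    rw [summable_congr hu2]
    exact hπs.add (hasSum_ite_eq i _).summable
  have hu2val : ∑' j, u j ^ 2 = 1 / π i - 1 := by
    rw [tsum_congr hu2, Summable.tsum_add hπs (hasSum_ite_eq i _).summable, hπ.tsum_eq,
      tsum_ite_eq i _]
    have hp : π i ≠ 0 := (hπpos i).ne'
    field_simp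
    ring
  -- bound on S j squared
  have hSbound : ∀ j, S j ^ 2 ≤ ∑' k, P t j k * f k ^ 2 := by
    intro j
    have ha : Summable fun k => Real.sqrt (P t j k) ^ 2 :=
      (hP t j ht).summable.congr fun k => (Real.sq_sqrt (hPnn t j k ht)).symm
    have hb : Summable fun k => (Real.sqrt (P t j k) * (f k * g k)) ^ 2 :=
      (hPf2 j).congr fun k => by
        rw [mul_pow, Real.sq_sqrt (hPnn t j k ht), mul_pow, hgsq, mul_one]
    have hcs := sq_tsum_le (fun k => Real.sqrt (P t j k))
      (fun k => Real.sqrt (P t j k) * (f k * g k)) ha hb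
    have e1 : (∑' k, Real.sqrt (P t j k) * (Real.sqrt (P t j k) * (f k * g k))) = S j := by
      apply tsum_congr
      intro k
      rw [← mul_assoc, Real.mul_self_sqrt (hPnn t j k ht)]
    have e2 : (∑' k, Real.sqrt (P t j k) ^ 2) = 1 := by
      rw [tsum_congr fun k => Real.sq_sqrt (hPnn t j k ht), (hP t j ht).tsum_eq]
    have e3 : (∑' k, (Real.sqrt (P t j k) * (f k * g k)) ^ 2) = ∑' k, P t j k * f k ^ 2 := by
      apply tsum_congr
      intro k
      rw [mul_pow, Real.sq_sqrt (hPnn t j k ht), mul_pow, hgsq, mul_one]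
    rw [e1, e2, e3, one_mul] at hcs
    exact hcs
  -- summability of the weights
  have hw : Summable fun j => π j * ∑' k, P t j k * f k ^ 2 := by
    have hfib : ∀ j, HasSum (fun k => π j * (P t j k * f k ^ 2))
        (π j * ∑' k, P t j k * f k ^ 2) := fun j => (hPf2 j).hasSum.mul_left (π j)
    exact ⟨_, hprodf2.hasSum.prod_fiberwise hfib⟩
  have hv2sum : Summable fun j => v j ^ 2 := by
    apply Summable.of_nonneg_of_le (fun j => sq_nonneg _) (fun j => ?_)
      ((hw.mul_left 2).add ((hπs.mul_right (m ^ 2)).mul_left 2))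
    rw [hv' j, mul_pow, Real.sq_sqrt (hπnn j)]
    have h1 := hSbound j
    have h2 := mul_nonneg (hπnn j) (sq_nonneg (S j + m))
    nlinarith [mul_le_mul_of_nonneg_left h1 (hπnn j)]
  -- apply the spectral gap hypothesis
  have hgsum : Summable fun k => f k ^ 2 * π k * g k ^ 2 :=
    hf2.congr fun k => by rw [hgsq]; ring
  have hexp' := hexp g hgsum t ht
  have hveq : ∀ j, (f j ^ 2 * π j) * ((1 / f j) * S j - (1 / f j) * m) ^ 2 = v j ^ 2 := by
    intro j
    rw [hv' j, mul_pow, Real.sq_sqrt (hπnn j)]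
    have hfne : f j ≠ 0 := (hfpos j).ne'
    field_simp
  have hR : (∑' j, (f j ^ 2 * π j) * (g j - (1 / f j) * m) ^ 2) ≤ ∑' j, π j * f j ^ 2 := by
    have heq : ∀ j, (f j ^ 2 * π j) * (g j - (1 / f j) * m) ^ 2
        = π j * f j ^ 2 + (-(2 * m) * (π j * (f j * g j)) + m ^ 2 * π j) := by
      intro j
      have hfne : f j ≠ 0 := (hfpos j).ne'
      have e : (f j ^ 2 * π j) * (g j - (1 / f j) * m) ^ 2 = π j * (f j * g j - m) ^ 2 := by
        field_simp
      rw [e]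
      have hg2 := hgsq j
      linear_combination (π j * f j ^ 2) * hg2
    have s2 : Summable fun j => -(2 * m) * (π j * (f j * g j)) := hπfg.mul_left _
    have s3 : Summable fun j => m ^ 2 * π j := hπs.mul_left _
    rw [tsum_congr heq, Summable.tsum_add hf2 (s2.add s3), Summable.tsum_add s2 s3, tsum_mul_left,
      tsum_mul_left, ← hm, hπ.tsum_eq, mul_one]
    nlinarith [sq_nonneg m]
  -- final chain
  have h5 : Real.sqrt (∑' j, v j ^ 2)
      ≤ Real.exp (-σ * t) * Real.sqrt (∑' j, π j * f j ^ 2) := by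
    calc Real.sqrt (∑' j, v j ^ 2)
        = Real.sqrt (∑' j, (f j ^ 2 * π j) * ((1 / f j) * S j - (1 / f j) * m) ^ 2) := by
          rw [tsum_congr hveq]
      _ ≤ Real.exp (-σ * t) * Real.sqrt (∑' j, (f j ^ 2 * π j) * (g j - (1 / f j) * m) ^ 2) :=
          hexp'
      _ ≤ Real.exp (-σ * t) * Real.sqrt (∑' j, π j * f j ^ 2) := by
          exact mul_le_mul_of_nonneg_left (Real.sqrt_le_sqrt hR) (Real.exp_nonneg _)
  calc (∑' j, f j * |P t i j - π j|) = S i - m := hSi.symm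
    _ = ∑' j, u j * v j := hsum_uv.symm
    _ ≤ Real.sqrt (∑' j, u j ^ 2) * Real.sqrt (∑' j, v j ^ 2) := cs_tsum u v hu2sum hv2sum
    _ = Real.sqrt (1 / π i - 1) * Real.sqrt (∑' j, v j ^ 2) := by rw [hu2val]
    _ ≤ Real.sqrt (1 / π i - 1) * (Real.exp (-σ * t) * Real.sqrt (∑' j, π j * f j ^ 2)) :=
        mul_le_mul_of_nonneg_left h5 (Real.sqrt_nonneg _)
    _ = Real.sqrt (∑' j, π j * f j ^ 2) * Real.sqrt (1 / π i - 1) * Real.exp (-σ * t) := by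
        ring
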